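/- (Lemma 3, flow-level total-cost bound.) Assume the flow-level dual data and let a ∈ {0,1}. Assume: (A) for every k with α_k > 0: DI(k) ≤ m·r_k/κ, DJ(k) ≤ m·r_k/κ, and r_{k'} ≤ r_k for every k' ≤ k; (B) for all i ∈ I and k' with βI(i,k') > 0: r_ℓ ≤ κ·DI(k')/m for every ℓ ≤ k', DI(k)+DJ(k) ≤ 2·DI(k') for every k ≤ k', and DI(k')² ≤ 2m·FI(i,k'), and symmetrically for all j ∈ J and k' with βJ(j,k') > 0: r_ℓ ≤ κ·DJ(k')/m for every ℓ ≤ k', DI(k)+DJ(k) ≤ 2·DJ(k') for every k ≤ k', and DJ(k')² ≤ 2m·FJ(j,k'); (C) C_k ≤ a·max_{k'≤k} r_{k'} + χ·(DI(k)+DJ(k))/m + (1−2/m)·C*_k for every k; (D) w_k = α_k + Σ_{i∈I} Σ_{k'=k}^n βI(i,k')·LI(i,k) + Σ_{j∈J} Σ_{k'=k}^n βJ(j,k')·LJ(j,k) for every k. Then Σ_k w_k·C_k ≤ (a + 2χ/κ)·Σ_k α_k·r_k + 2(aκ + 2χ)·( Σ_{i∈I} Σ_k βI(i,k)·FI(i,k)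 + Σ_{j∈J} Σ_k βJ(j,k)·FJ(j,k) ) + (1 − 2/m)·OPT. -/
import Mathlib



lemma sum_swap_aux {n : ℕ} {ι : Type*} [Fintype ι] (β L : ι → Fin n → ℝ) (T : Fin n → ℝ) :
    ∑ k, (∑ i, ∑ k' ∈ Finset.Ici k, β i k' * L i k) * T k
      = ∑ i, ∑ k', β i k' * ∑ kk ∈ Finset.Iic k', L i kk * T kk := by
  calc ∑ k, (∑ i, ∑ k' ∈ Finset.Ici k, β i k' * L i k) * T k
      = ∑ k, ∑ i, ∑ k' ∈ Finset.Ici k, β i k' * (L i k * T k) := by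
        refine Finset.sum_congr rfl fun k _ => ?_
        rw [Finset.sum_mul]
        refine Finset.sum_congr rfl fun i _ => ?_
        rw [Finset.sum_mul]
        exact Finset.sum_congr rfl fun k' _ => by ring
    _ = ∑ i, ∑ k, ∑ k' ∈ Finset.Ici k, β i k' * (L i k * T k) := Finset.sum_comm
    _ = ∑ i, ∑ k', ∑ kk ∈ Finset.Iic k', β i k' * (L i kk * T kk) := by
        refine Finset.sum_congr rfl fun i _ => ?_
        exact Finset.sum_comm' (by intro x y; simp [Finset.mem_Ici, Finset.mem_Iic])
    _ = ∑ i, ∑ k', β i k' * ∑ kk ∈ Finset.Iic k', L i kk * T kk := by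
        simp [Finset.mul_sum]

/-- Lemma 3 (flow-level total-cost bound). -/
theorem flow_level_total_cost_bound
    -- flow-level dual data
    (n : ℕ) (hn : 1 ≤ n)
    (I J : Type*) [Fintype I] [Fintype J] [Nonempty I] [Nonempty J]
    (m κ χ : ℝ) (hm : 2 ≤ m) (hκ : 0 < κ) (hχ : 1 ≤ χ)
    (w r C Cstar α DI DJ : Fin n → ℝ)
    (βI LI FI : I → Fin n → ℝ) (βJ LJ FJ : J → Fin n → ℝ)
    (hw : ∀ k, 0 ≤ w k) (hr : ∀ k, 0 ≤ r k) (hC : ∀ k, 0 ≤ C k)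
    (hCstar : ∀ k, 0 ≤ Cstar k) (hα : ∀ k, 0 ≤ α k)
    (hβI : ∀ i k, 0 ≤ βI i k) (hβJ : ∀ j k, 0 ≤ βJ j k)
    (hLI : ∀ i k, 0 ≤ LI i k) (hLJ : ∀ j k, 0 ≤ LJ j k)
    (hDI : ∀ k, 0 ≤ DI k) (hDJ : ∀ k, 0 ≤ DJ k)
    (hFI : ∀ i k, 0 ≤ FI i k) (hFJ : ∀ j k, 0 ≤ FJ j k)
    (hDImono : Monotone DI) (hDJmono : Monotone DJ)
    (hcumI : ∀ i k, ∑ k' ∈ Finset.Iic k, LI i k' ≤ DI k)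
    (hcumJ : ∀ j k, ∑ k' ∈ Finset.Iic k, LJ j k' ≤ DJ k)
    (a : ℝ) (ha : a = 0 ∨ a = 1)
    -- (A) Observation 1 parts (5)–(7)
    (hA : ∀ k, 0 < α k →
      DI k ≤ m * r k / κ ∧ DJ k ≤ m * r k / κ ∧ ∀ k' ≤ k, r k' ≤ r k)
    -- (B) Observation 1 parts (1)–(4) and Observation 2
    (hBI : ∀ i k', 0 < βI i k' →
      (∀ ℓ ≤ k', r ℓ ≤ κ * DI k' / m) ∧
      (∀ k ≤ k', DI k + DJ k ≤ 2 * DI k') ∧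
      (DI k') ^ 2 ≤ 2 * m * FI i k')
    (hBJ : ∀ j k', 0 < βJ j k' →
      (∀ ℓ ≤ k', r ℓ ≤ κ * DJ k' / m) ∧
      (∀ k ≤ k', DI k + DJ k ≤ 2 * DJ k') ∧
      (DJ k') ^ 2 ≤ 2 * m * FJ j k')
    -- (C) completion-time bound of Lemma 1
    (hCb : ∀ k, C k ≤ a * (Finset.Iic k).sup' Finset.nonempty_Iic r
        + χ * (DI k + DJ k) / m + (1 - 2 / m) * Cstar k)
    -- (D) tightness of the dual constraints
    (hD : ∀ k, w k = α k
        + ∑ i, ∑ k' ∈ Finset.Ici k, βI i k' * LI i k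
        + ∑ j, ∑ k' ∈ Finset.Ici k, βJ j k' * LJ j k) :
    ∑ k, w k * C k
      ≤ (a + 2 * χ / κ) * ∑ k, α k * r k
        + 2 * (a * κ + 2 * χ) *
            (∑ i, ∑ k, βI i k * FI i k + ∑ j, ∑ k, βJ j k * FJ j k)
        + (1 - 2 / m) * ∑ k, w k * Cstar k := by

  classical
  have hm0 : (0:ℝ) < m := lt_of_lt_of_le two_pos hm
  have ha0 : 0 ≤ a := by rcases ha with h | h <;> rw [h] <;> norm_num
  have hχ0 : (0:ℝ) ≤ χ := le_trans zero_le_one hχ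
  have hκ0 : (0:ℝ) ≤ κ := le_of_lt hκ
  have hc0 : 0 ≤ a * κ + 2 * χ := by nlinarith
  set M : Fin n → ℝ := fun k => (Finset.Iic k).sup' Finset.nonempty_Iic r with hMdef
  set T : Fin n → ℝ := fun k => a * M k + χ * (DI k + DJ k) / m with hTdef
  -- α-term bound
  have hαT : ∀ k, α k * T k ≤ (a + 2 * χ / κ) * (α k * r k) := by
    intro k
    rcases eq_or_lt_of_le (hα k) with h | h
    · simp [← h]
    · obtain ⟨h1, h2, h3⟩ := hA k h
      have hMk : M k ≤ r k :=
        Finset.sup'_le _ _ fun ℓ hℓ => h3 ℓ (Finset.mem_Iic.mp hℓ)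
      have h1' : DI k * κ ≤ m * r k := by rwa [← le_div_iff₀ hκ]
      have h2' : DJ k * κ ≤ m * r k := by rwa [← le_div_iff₀ hκ]
      have hDle : χ * (DI k + DJ k) / m ≤ 2 * χ / κ * r k := by
        have hrw : 2 * χ / κ * r k = 2 * χ * r k / κ := by ring
        rw [hrw, div_le_div_iff₀ hm0 hκ]
        nlinarith [mul_le_mul_of_nonneg_left (add_le_add h1' h2') hχ0]
      have hTk : T k ≤ (a + 2 * χ / κ) * r k := by
        calc T k = a * M k + χ * (DI k + DJ k) / m := rfl
          _ ≤ a * r k + 2 * χ / κ * r k :=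
              add_le_add (mul_le_mul_of_nonneg_left hMk ha0) hDle
          _ = (a + 2 * χ / κ) * r k := by ring
      calc α k * T k ≤ α k * ((a + 2 * χ / κ) * r k) :=
            mul_le_mul_of_nonneg_left hTk (hα k)
        _ = (a + 2 * χ / κ) * (α k * r k) := by ring
  -- βI-term bound
  have hβIT : ∀ i k', βI i k' * (∑ kk ∈ Finset.Iic k', LI i kk * T kk)
      ≤ 2 * (a * κ + 2 * χ) * (βI i k' * FI i k') := by
    intro i k'
    rcases eq_or_lt_of_le (hβI i k') with h | h
    · simp [← h]
    · obtain ⟨h1, h2, h3⟩ := hBI i k' h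
      have hTk : ∀ kk ≤ k', T kk ≤ (a * κ + 2 * χ) * DI k' / m := by
        intro kk hkk
        have hMk : M kk ≤ κ * DI k' / m :=
          Finset.sup'_le _ _ fun ℓ hℓ => h1 ℓ (le_trans (Finset.mem_Iic.mp hℓ) hkk)
        have hd : χ * (DI kk + DJ kk) / m ≤ χ * (2 * DI k') / m := by
          apply div_le_div_of_nonneg_right ?_ hm0.le
          exact mul_le_mul_of_nonneg_left (h2 kk hkk) hχ0
        calc T kk = a * M kk + χ * (DI kk + DJ kk) / m := rfl
          _ ≤ a * (κ * DI k' / m) + χ * (2 * DI k') / m :=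
              add_le_add (mul_le_mul_of_nonneg_left hMk ha0) hd
          _ = (a * κ + 2 * χ) * DI k' / m := by ring
      have hnn : 0 ≤ (a * κ + 2 * χ) * DI k' / m :=
        div_nonneg (mul_nonneg hc0 (hDI k')) hm0.le
      have hsum : ∑ kk ∈ Finset.Iic k', LI i kk * T kk
          ≤ (a * κ + 2 * χ) * DI k' / m * DI k' := by
        calc ∑ kk ∈ Finset.Iic k', LI i kk * T kk
            ≤ ∑ kk ∈ Finset.Iic k', LI i kk * ((a * κ + 2 * χ) * DI k' / m) :=
              Finset.sum_le_sum fun kk hkk =>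
                mul_le_mul_of_nonneg_left (hTk kk (Finset.mem_Iic.mp hkk)) (hLI i kk)
          _ = (∑ kk ∈ Finset.Iic k', LI i kk) * ((a * κ + 2 * χ) * DI k' / m) := by
              rw [← Finset.sum_mul]
          _ ≤ DI k' * ((a * κ + 2 * χ) * DI k' / m) :=
              mul_le_mul_of_nonneg_right (hcumI i k') hnn
          _ = (a * κ + 2 * χ) * DI k' / m * DI k' := by ring
      have hF : (a * κ + 2 * χ) * DI k' / m * DI k' ≤ 2 * (a * κ + 2 * χ) * FI i k' := by
        have hrw : (a * κ + 2 * χ) * DI k' / m * DI k'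
            = (a * κ + 2 * χ) * ((DI k') ^ 2 / m) := by ring
        rw [hrw]
        have h2m : (DI k') ^ 2 / m ≤ 2 * FI i k' := by
          rw [div_le_iff₀ hm0]; nlinarith
        calc (a * κ + 2 * χ) * ((DI k') ^ 2 / m)
            ≤ (a * κ + 2 * χ) * (2 * FI i k') := mul_le_mul_of_nonneg_left h2m hc0
          _ = 2 * (a * κ + 2 * χ) * FI i k' := by ring
      calc βI i k' * (∑ kk ∈ Finset.Iic k', LI i kk * T kk)
          ≤ βI i k' * (2 * (a * κ + 2 * χ) * FI i k') :=
            mul_le_mul_of_nonneg_left (le_trans hsum hF) (hβI i k')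
        _ = 2 * (a * κ + 2 * χ) * (βI i k' * FI i k') := by ring
  -- βJ-term bound
  have hβJT : ∀ j k', βJ j k' * (∑ kk ∈ Finset.Iic k', LJ j kk * T kk)
      ≤ 2 * (a * κ + 2 * χ) * (βJ j k' * FJ j k') := by
    intro j k'
    rcases eq_or_lt_of_le (hβJ j k') with h | h
    · simp [← h]
    · obtain ⟨h1, h2, h3⟩ := hBJ j k' h
      have hTk : ∀ kk ≤ k', T kk ≤ (a * κ + 2 * χ) * DJ k' / m := by
        intro kk hkk
        have hMk : M kk ≤ κ * DJ k' / m :=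
          Finset.sup'_le _ _ fun ℓ hℓ => h1 ℓ (le_trans (Finset.mem_Iic.mp hℓ) hkk)
        have hd : χ * (DI kk + DJ kk) / m ≤ χ * (2 * DJ k') / m := by
          apply div_le_div_of_nonneg_right ?_ hm0.le
          exact mul_le_mul_of_nonneg_left (h2 kk hkk) hχ0
        calc T kk = a * M kk + χ * (DI kk + DJ kk) / m := rfl
          _ ≤ a * (κ * DJ k' / m) + χ * (2 * DJ k') / m :=
              add_le_add (mul_le_mul_of_nonneg_left hMk ha0) hd
          _ = (a * κ + 2 * χ) * DJ k' / m := by ring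
      have hnn : 0 ≤ (a * κ + 2 * χ) * DJ k' / m :=
        div_nonneg (mul_nonneg hc0 (hDJ k')) hm0.le
      have hsum : ∑ kk ∈ Finset.Iic k', LJ j kk * T kk
          ≤ (a * κ + 2 * χ) * DJ k' / m * DJ k' := by
        calc ∑ kk ∈ Finset.Iic k', LJ j kk * T kk
            ≤ ∑ kk ∈ Finset.Iic k', LJ j kk * ((a * κ + 2 * χ) * DJ k' / m) :=
              Finset.sum_le_sum fun kk hkk =>
                mul_le_mul_of_nonneg_left (hTk kk (Finset.mem_Iic.mp hkk)) (hLJ j kk)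
          _ = (∑ kk ∈ Finset.Iic k', LJ j kk) * ((a * κ + 2 * χ) * DJ k' / m) := by
              rw [← Finset.sum_mul]
          _ ≤ DJ k' * ((a * κ + 2 * χ) * DJ k' / m) :=
              mul_le_mul_of_nonneg_right (hcumJ j k') hnn
          _ = (a * κ + 2 * χ) * DJ k' / m * DJ k' := by ring
      have hF : (a * κ + 2 * χ) * DJ k' / m * DJ k' ≤ 2 * (a * κ + 2 * χ) * FJ j k' := by
        have hrw : (a * κ + 2 * χ) * DJ k' / m * DJ k'
            = (a * κ + 2 * χ) * ((DJ k') ^ 2 / m) := by ring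
        rw [hrw]
        have h2m : (DJ k') ^ 2 / m ≤ 2 * FJ j k' := by
          rw [div_le_iff₀ hm0]; nlinarith
        calc (a * κ + 2 * χ) * ((DJ k') ^ 2 / m)
            ≤ (a * κ + 2 * χ) * (2 * FJ j k') := mul_le_mul_of_nonneg_left h2m hc0
          _ = 2 * (a * κ + 2 * χ) * FJ j k' := by ring
      calc βJ j k' * (∑ kk ∈ Finset.Iic k', LJ j kk * T kk)
          ≤ βJ j k' * (2 * (a * κ + 2 * χ) * FJ j k') :=
            mul_le_mul_of_nonneg_left (le_trans hsum hF) (hβJ j k')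
        _ = 2 * (a * κ + 2 * χ) * (βJ j k' * FJ j k') := by ring
  -- split ∑ w T via (D)
  have hsplit : ∑ k, w k * T k
      = ∑ k, α k * T k
      + ∑ i, ∑ k', βI i k' * ∑ kk ∈ Finset.Iic k', LI i kk * T kk
      + ∑ j, ∑ k', βJ j k' * ∑ kk ∈ Finset.Iic k', LJ j kk * T kk := by
    rw [← sum_swap_aux βI LI T, ← sum_swap_aux βJ LJ T,
      ← Finset.sum_add_distrib, ← Finset.sum_add_distrib]
    refine Finset.sum_congr rfl fun k _ => ?_
    rw [hD k]; ring
  have hWT : ∑ k, w k * T k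
      ≤ (a + 2 * χ / κ) * ∑ k, α k * r k
      + 2 * (a * κ + 2 * χ) * ∑ i, ∑ k, βI i k * FI i k
      + 2 * (a * κ + 2 * χ) * ∑ j, ∑ k, βJ j k * FJ j k := by
    rw [hsplit]
    refine add_le_add (add_le_add ?_ ?_) ?_
    · calc ∑ k, α k * T k ≤ ∑ k, (a + 2 * χ / κ) * (α k * r k) :=
          Finset.sum_le_sum fun k _ => hαT k
        _ = (a + 2 * χ / κ) * ∑ k, α k * r k := by rw [← Finset.mul_sum]
    · calc ∑ i, ∑ k', βI i k' * ∑ kk ∈ Finset.Iic k', LI i kk * T kk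
          ≤ ∑ i, ∑ k', 2 * (a * κ + 2 * χ) * (βI i k' * FI i k') :=
            Finset.sum_le_sum fun i _ => Finset.sum_le_sum fun k' _ => hβIT i k'
        _ = 2 * (a * κ + 2 * χ) * ∑ i, ∑ k, βI i k * FI i k := by
            simp [Finset.mul_sum]
    · calc ∑ j, ∑ k', βJ j k' * ∑ kk ∈ Finset.Iic k', LJ j kk * T kk
          ≤ ∑ j, ∑ k', 2 * (a * κ + 2 * χ) * (βJ j k' * FJ j k') :=
            Finset.sum_le_sum fun j _ => Finset.sum_le_sum fun k' _ => hβJT j k'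
        _ = 2 * (a * κ + 2 * χ) * ∑ j, ∑ k, βJ j k * FJ j k := by
            simp [Finset.mul_sum]
  -- step 1: apply (C)
  have hfac : (0:ℝ) ≤ 1 - 2 / m := by
    have : 2 / m ≤ 1 := (div_le_one hm0).mpr hm
    linarith
  have step1 : ∑ k, w k * C k ≤ ∑ k, w k * T k + (1 - 2 / m) * ∑ k, w k * Cstar k := by
    have h : ∑ k, w k * C k ≤ ∑ k, (w k * T k + (1 - 2 / m) * (w k * Cstar k)) := by
      refine Finset.sum_le_sum fun k _ => ?_
      have hc : C k ≤ T k + (1 - 2 / m) * Cstar k := hCb k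
      calc w k * C k ≤ w k * (T k + (1 - 2 / m) * Cstar k) :=
          mul_le_mul_of_nonneg_left hc (hw k)
        _ = w k * T k + (1 - 2 / m) * (w k * Cstar k) := by ring
    calc ∑ k, w k * C k ≤ ∑ k, (w k * T k + (1 - 2 / m) * (w k * Cstar k)) := h
      _ = ∑ k, w k * T k + (1 - 2 / m) * ∑ k, w k * Cstar k := by
          rw [Finset.sum_add_distrib, ← Finset.mul_sum]
  calc ∑ k, w k * C k ≤ ∑ k, w k * T k + (1 - 2 / m) * ∑ k, w k * Cstar k := step1
    _ ≤ ((a + 2 * χ / κ) * ∑ k, α k * r k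
        + 2 * (a * κ + 2 * χ) * ∑ i, ∑ k, βI i k * FI i k
        + 2 * (a * κ + 2 * χ) * ∑ j, ∑ k, βJ j k * FJ j k)
        + (1 - 2 / m) * ∑ k, w k * Cstar k := by linarith
    _ = (a + 2 * χ / κ) * ∑ k, α k * r k
        + 2 * (a * κ + 2 * χ) *
            (∑ i, ∑ k, βI i k * FI i k + ∑ j, ∑ k, βJ j k * FJ j k)
        + (1 - 2 / m) * ∑ k, w k * Cstar k := by ring
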